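/- Let n ≥ 1 be a natural number and let f : [0,∞) → ℝ be a positive, nondecreasing function with f(r) → +∞ as r → +∞; set ψ = log f. If the sequence ζ(m) = f(m) / f(m+2)^{n/(n+1)} tends to +∞ as m → ∞, then there exist r₀ > 0 and C > 0 such that ψ(r) ≤ C·((n+1)/n)^{r/2} for all r ≥ r₀. -/

import Mathlib

open Filter

/-- Let `n ≥ 1` and let `f : [0,∞) → ℝ` be a positive nondecreasing
function with `f(r) → +∞` as `r → +∞`; set `ψ = log f`.  If the sequence
`ζ(m) = f(m) / f(m+2)^(n/(n+1))` tends to `+∞`, then there are `r₀ > 0` and `C > 0`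
such that `ψ(r) ≤ C ((n+1)/n)^(r/2)` for all `r ≥ r₀`. -/
theorem log_bound_of_zeta_tendsto_atTop
    (n : ℕ) (hn : 1 ≤ n) (f : ℝ → ℝ)
    (hpos : ∀ r : ℝ, 0 ≤ r → 0 < f r)
    (hmono : ∀ r s : ℝ, 0 ≤ r → r ≤ s → f r ≤ f s)
    (hinf : Tendsto f atTop atTop)
    (hζ : Tendsto (fun m : ℕ => f m / (f (m + 2)) ^ ((n : ℝ) / (n + 1)))
      atTop atTop) :
    ∃ r₀ > (0 : ℝ), ∃ C > (0 : ℝ), ∀ r : ℝ, r₀ ≤ r →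
      Real.log (f r) ≤ C * ((((n : ℝ) + 1) / n)) ^ (r / 2) := by
  have hn0 : (0:ℝ) < n := by exact_mod_cast hn
  set q : ℝ := ((n:ℝ) + 1) / n with hq
  have hq1 : 1 < q := by
    rw [hq, lt_div_iff₀ hn0]; linarith
  have hq0 : 0 < q := lt_trans one_pos hq1
  -- get M₀ with ζ(m) ≥ 1 for m ≥ M₀
  obtain ⟨M₀, hM₀⟩ := (hζ.eventually_ge_atTop 1).exists_forall_of_atTop
  -- get R with f r ≥ exp 1 for r ≥ R
  obtain ⟨R, hR⟩ := (hinf.eventually_ge_atTop (Real.exp 1)).exists_forall_of_atTop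
  set M : ℕ := max M₀ ⌈R⌉₊ with hM
  have hMR : R ≤ (M:ℝ) := le_trans (Nat.le_ceil R) (by exact_mod_cast le_max_right M₀ ⌈R⌉₊)
  set ψM : ℝ := Real.log (f M) with hψM
  have hfM : Real.exp 1 ≤ f M := hR _ hMR
  have hψM1 : 1 ≤ ψM := by
    rw [hψM, Real.le_log_iff_exp_le (hpos _ (Nat.cast_nonneg M))]
    exact hfM
  have hψM0 : 0 < ψM := lt_of_lt_of_le one_pos hψM1
  -- key recursive inequality
  have key : ∀ m : ℕ, M ≤ m → Real.log (f ((m:ℝ) + 2)) ≤ q * Real.log (f m) := by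
    intro m hm
    have h1 : (1:ℝ) ≤ f m / (f ((m:ℝ) + 2)) ^ ((n : ℝ) / (n + 1)) :=
      hM₀ m (le_trans (le_max_left _ _) hm)
    have hf2 : 0 < f ((m:ℝ) + 2) := hpos _ (by positivity)
    have hrp : (0:ℝ) < (f ((m:ℝ) + 2)) ^ ((n : ℝ) / (n + 1)) :=
      Real.rpow_pos_of_pos hf2 _
    have h2 : (f ((m:ℝ) + 2)) ^ ((n : ℝ) / (n + 1)) ≤ f m := by
      rw [le_div_iff₀ hrp, one_mul] at h1
      exact h1
    have h3 : ((n : ℝ) / (n + 1)) * Real.log (f ((m:ℝ) + 2)) ≤ Real.log (f m) := by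
      rw [← Real.log_rpow hf2]
      exact Real.log_le_log hrp h2
    have hnn : (0:ℝ) < (n : ℝ) / (n + 1) := by positivity
    rw [hq]
    rw [div_mul_eq_mul_div, le_div_iff₀ hn0]
    calc Real.log (f ((m:ℝ) + 2)) * n
        = ((n:ℝ) + 1) * (((n : ℝ) / (n + 1)) * Real.log (f ((m:ℝ) + 2))) := by
          field_simp
      _ ≤ ((n:ℝ) + 1) * Real.log (f m) := by
          apply mul_le_mul_of_nonneg_left h3 (by positivity)
  -- iterate
  have ind : ∀ k : ℕ, Real.log (f ((M:ℝ) + 2 * k)) ≤ q ^ k * ψM := by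
    intro k
    induction k with
    | zero => simp [hψM]
    | succ k ih =>
        have hstep : Real.log (f (((M + 2*k : ℕ):ℝ) + 2)) ≤
            q * Real.log (f ((M + 2*k : ℕ):ℝ)) :=
          key (M + 2*k) (Nat.le_add_right _ _)
        have hcast : ((M + 2*k : ℕ):ℝ) = (M:ℝ) + 2 * k := by push_cast; ring
        rw [hcast] at hstep
        have : (M:ℝ) + 2 * (k+1 : ℕ) = ((M:ℝ) + 2 * k) + 2 := by push_cast; ring
        rw [this]
        calc Real.log (f (((M:ℝ) + 2 * k) + 2)) ≤ q * Real.log (f ((M:ℝ) + 2 * k)) := hstep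
          _ ≤ q * (q ^ k * ψM) := mul_le_mul_of_nonneg_left ih (le_of_lt hq0)
          _ = q ^ (k+1) * ψM := by ring
  refine ⟨(M:ℝ) + 1, by positivity, ψM * q ^ ((1:ℝ) - (M:ℝ)/2), by positivity, ?_⟩
  intro r hr
  have hrM : (M:ℝ) ≤ r := le_trans (by linarith) hr
  have hr0 : (0:ℝ) ≤ r := le_trans (Nat.cast_nonneg M) hrM
  set k : ℕ := ⌈(r - M)/2⌉₊ with hk
  have hk1 : (r - M)/2 ≤ (k:ℝ) := Nat.le_ceil _
  have hk2 : (k:ℝ) ≤ (r - M)/2 + 1 :=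
    le_of_lt (Nat.ceil_lt_add_one (by linarith))
  have hrle : r ≤ (M:ℝ) + 2 * k := by linarith
  have hfr : 0 < f r := hpos r hr0
  calc Real.log (f r) ≤ Real.log (f ((M:ℝ) + 2 * k)) :=
        Real.log_le_log hfr (hmono r _ hr0 hrle)
    _ ≤ q ^ k * ψM := ind k
    _ = ψM * q ^ ((k:ℕ):ℝ) := by rw [Real.rpow_natCast]; ring
    _ ≤ ψM * q ^ ((r - M)/2 + 1) := by
        apply mul_le_mul_of_nonneg_left _ (le_of_lt hψM0)
        exact Real.rpow_le_rpow_of_exponent_le (le_of_lt hq1) hk2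
    _ = ψM * q ^ ((1:ℝ) - (M:ℝ)/2) * q ^ (r / 2) := by
        rw [mul_assoc, ← Real.rpow_add hq0]
        ring_nf
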